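/- arXiv:1201.1028 — 8 statements merged into one kernel-verified Lean document; each statement's English description precedes it below -/
import Mathlib

section
/- Let (Y,g) be an oriented Riemannian 3-manifold of constant sectional curvature κ. Then for any 1-form ω on Y, đ(L_g ω) = K_g(*dω), where L_g(ω)_{ij} = ∇_i ω_j + ∇_j ω_i, K_g(η) = L_g(η) − (2/3)(δη) g is the conformal Killing operator, * is the Hodge star from 2-forms to 1-forms, and đ is the Dirac-type operator (đh)_{ij} = Sym_{ij}(Σ_{k,l} ε_{ikl}(∇_k h_{lj} − ∇_l h_{kj})). -/
open scoped BigOperators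
open MeasureTheory

/-- Levi-Civita symbol on `Fin 3` (components of the volume form in an
oriented orthonormal frame), with `eps 0 1 2 = 1`. -/
noncomputable def eps : Fin 3 → Fin 3 → Fin 3 → ℝ := fun i j k =>
  if (i, j, k) = (0, 1, 2) ∨ (i, j, k) = (1, 2, 0) ∨ (i, j, k) = (2, 0, 1) then 1
  else if (i, j, k) = (2, 1, 0) ∨ (i, j, k) = (1, 0, 2) ∨ (i, j, k) = (0, 2, 1) then -1
  else 0

/-- Kronecker delta: the components of the metric in an orthonormal frame. -/
noncomputable def kd : Fin 3 → Fin 3 → ℝ := fun i j => if i = j then 1 else 0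

/-- The Dirac-type operator `đ`:  given `D k l j = ∇ₖ h_{lj}` (the covariant
derivative components of a symmetric 2-tensor `h`), this is
`(đh)_{ij} = Sym_{ij} ( Σ_{k,l} ε_{ikl} (∇ₖ h_{lj} − ∇ₗ h_{kj}) )`. -/
noncomputable def dslash (D : Fin 3 → Fin 3 → Fin 3 → ℝ) (i j : Fin 3) : ℝ :=
  (1/2) * ((∑ k, ∑ l, eps i k l * (D k l j - D l k j))
    + (∑ k, ∑ l, eps j k l * (D k l i - D l k i)))

/-- Components `∇_a (đh)_{ij}` of the covariant derivative of `đh`, given the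
second covariant derivative components `D2 a k l j = ∇_a ∇ₖ h_{lj}` of `h`. -/
noncomputable def dslashD (D2 : Fin 3 → Fin 3 → Fin 3 → Fin 3 → ℝ) (a i j : Fin 3) : ℝ :=
  (1/2) * ((∑ k, ∑ l, eps i k l * (D2 a k l j - D2 a l k j))
    + (∑ k, ∑ l, eps j k l * (D2 a k l i - D2 a l k i)))

lemma fmk0 (h : 0 < 3) : (⟨0, h⟩ : Fin 3) = 0 := rfl
lemma fmk1 (h : 1 < 3) : (⟨1, h⟩ : Fin 3) = 1 := rfl
lemma fmk2 (h : 2 < 3) : (⟨2, h⟩ : Fin 3) = 2 := rfl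
lemma eps_000 : eps 0 0 0 = 0 := by simp only [eps]; rw [if_neg (by decide), if_neg (by decide)]
lemma eps_001 : eps 0 0 1 = 0 := by simp only [eps]; rw [if_neg (by decide), if_neg (by decide)]
lemma eps_002 : eps 0 0 2 = 0 := by simp only [eps]; rw [if_neg (by decide), if_neg (by decide)]
lemma eps_010 : eps 0 1 0 = 0 := by simp only [eps]; rw [if_neg (by decide), if_neg (by decide)]
lemma eps_011 : eps 0 1 1 = 0 := by simp only [eps]; rw [if_neg (by decide), if_neg (by decide)]
lemma eps_012 : eps 0 1 2 = 1 := by simp only [eps]; rw [if_pos (by decide)]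
lemma eps_020 : eps 0 2 0 = 0 := by simp only [eps]; rw [if_neg (by decide), if_neg (by decide)]
lemma eps_021 : eps 0 2 1 = -1 := by simp only [eps]; rw [if_neg (by decide), if_pos (by decide)]
lemma eps_022 : eps 0 2 2 = 0 := by simp only [eps]; rw [if_neg (by decide), if_neg (by decide)]
lemma eps_100 : eps 1 0 0 = 0 := by simp only [eps]; rw [if_neg (by decide), if_neg (by decide)]
lemma eps_101 : eps 1 0 1 = 0 := by simp only [eps]; rw [if_neg (by decide), if_neg (by decide)]
lemma eps_102 : eps 1 0 2 = -1 := by simp only [eps]; rw [if_neg (by decide), if_pos (by decide)]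
lemma eps_110 : eps 1 1 0 = 0 := by simp only [eps]; rw [if_neg (by decide), if_neg (by decide)]
lemma eps_111 : eps 1 1 1 = 0 := by simp only [eps]; rw [if_neg (by decide), if_neg (by decide)]
lemma eps_112 : eps 1 1 2 = 0 := by simp only [eps]; rw [if_neg (by decide), if_neg (by decide)]
lemma eps_120 : eps 1 2 0 = 1 := by simp only [eps]; rw [if_pos (by decide)]
lemma eps_121 : eps 1 2 1 = 0 := by simp only [eps]; rw [if_neg (by decide), if_neg (by decide)]
lemma eps_122 : eps 1 2 2 = 0 := by simp only [eps]; rw [if_neg (by decide), if_neg (by decide)]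
lemma eps_200 : eps 2 0 0 = 0 := by simp only [eps]; rw [if_neg (by decide), if_neg (by decide)]
lemma eps_201 : eps 2 0 1 = 1 := by simp only [eps]; rw [if_pos (by decide)]
lemma eps_202 : eps 2 0 2 = 0 := by simp only [eps]; rw [if_neg (by decide), if_neg (by decide)]
lemma eps_210 : eps 2 1 0 = -1 := by simp only [eps]; rw [if_neg (by decide), if_pos (by decide)]
lemma eps_211 : eps 2 1 1 = 0 := by simp only [eps]; rw [if_neg (by decide), if_neg (by decide)]
lemma eps_212 : eps 2 1 2 = 0 := by simp only [eps]; rw [if_neg (by decide), if_neg (by decide)]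
lemma eps_220 : eps 2 2 0 = 0 := by simp only [eps]; rw [if_neg (by decide), if_neg (by decide)]
lemma eps_221 : eps 2 2 1 = 0 := by simp only [eps]; rw [if_neg (by decide), if_neg (by decide)]
lemma eps_222 : eps 2 2 2 = 0 := by simp only [eps]; rw [if_neg (by decide), if_neg (by decide)]
lemma kd_00 : kd 0 0 = 1 := by simp only [kd]; rw [if_pos (by decide)]
lemma kd_01 : kd 0 1 = 0 := by simp only [kd]; rw [if_neg (by decide)]
lemma kd_02 : kd 0 2 = 0 := by simp only [kd]; rw [if_neg (by decide)]
lemma kd_10 : kd 1 0 = 0 := by simp only [kd]; rw [if_neg (by decide)]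
lemma kd_11 : kd 1 1 = 1 := by simp only [kd]; rw [if_pos (by decide)]
lemma kd_12 : kd 1 2 = 0 := by simp only [kd]; rw [if_neg (by decide)]
lemma kd_20 : kd 2 0 = 0 := by simp only [kd]; rw [if_neg (by decide)]
lemma kd_21 : kd 2 1 = 0 := by simp only [kd]; rw [if_neg (by decide)]
lemma kd_22 : kd 2 2 = 1 := by simp only [kd]; rw [if_pos (by decide)]

set_option maxHeartbeats 1000000 in
/-- on an oriented 3-manifold of constant sectional curvature κ,
`đ(L_g ω) = K_g(*dω)` for every 1-form `ω`.  Components at a point in an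
oriented orthonormal frame: `ω`, `Dω a b = ∇_a ω_b`, `D2 a b c = ∇_a ∇_b ω_c`;
constant curvature `κ` enters through the commutation rule
`∇_a∇_b ω_c − ∇_b∇_a ω_c = −κ(δ_{bc} ω_a − δ_{ac} ω_b)`.
The left side is `đ` applied to `(L_g ω)_{lj} = ∇_l ω_j + ∇_j ω_l`
(with `∇ₖ (L_g ω)_{lj} = D2 k l j + D2 k j l`); the right side is the
conformal Killing operator applied to `(*dω)_i = Σ ε_{ikl} ∇ₖ ω_l`. -/
theorem statement4 (κ : ℝ) (ω : Fin 3 → ℝ)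
    (Dω : Fin 3 → Fin 3 → ℝ) (D2 : Fin 3 → Fin 3 → Fin 3 → ℝ)
    (hcomm : ∀ a b c, D2 a b c - D2 b a c = -κ * (kd b c * ω a - kd a c * ω b)) :
    ∀ i j,
      dslash (fun k l j => D2 k l j + D2 k j l) i j
        = (∑ k, ∑ l, eps j k l * D2 i k l) + (∑ k, ∑ l, eps i k l * D2 j k l)
          - (2/3) * (∑ m, ∑ k, ∑ l, eps m k l * D2 m k l) * kd i j := by
  have h : ∀ a b c : Fin 3, D2 a b c = D2 b a c + -κ * (kd b c * ω a - kd a c * ω b) := by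
    intro a b c
    have := hcomm a b c
    linarith
  intro i j
  fin_cases i <;> fin_cases j <;>
    simp only [dslash, Fin.sum_univ_three, fmk0, fmk1, fmk2, eps_000, eps_001, eps_002, eps_010, eps_011, eps_012, eps_020, eps_021, eps_022, eps_100, eps_101, eps_102, eps_110, eps_111, eps_112, eps_120, eps_121, eps_122, eps_200, eps_201, eps_202, eps_210, eps_211, eps_212, eps_220, eps_221, eps_222, kd_00, kd_01, kd_02, kd_10, kd_11, kd_12, kd_20, kd_21, kd_22] <;>
    rw [h 1 0 0, h 2 0 0, h 2 1 0, h 1 0 1, h 2 0 1, h 2 1 1, h 1 0 2, h 2 0 2, h 2 1 2] <;>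
    simp only [kd_00, kd_01, kd_02, kd_10, kd_11, kd_12, kd_20, kd_21, kd_22] <;> ring
end

section
/- Let (Y,g) be an oriented Riemannian 3-manifold of constant sectional curvature κ. For any symmetric 2-tensor h, δ_Y(đ h) = * d (δ_Y h), where (δ_Y h)_j = ∇^i h_{ij} is the divergence, * is the Hodge star from 2-forms to 1-forms, d is the exterior derivative on 1-forms, and đ is the operator (đh)_{ij} = Sym_{ij}(Σ_{k,l} ε_{ikl}(∇_k h_{lj} − ∇_l h_{kj})). -/
open scoped BigOperators
open MeasureTheory

/-- on an oriented 3-manifold of constant sectional curvature κ,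
`δ_Y(đh) = *d(δ_Y h)` for any symmetric 2-tensor `h`.  Components at a point
in an oriented orthonormal frame: `h`, `D1 k l j = ∇ₖ h_{lj}`,
`D2 a k l j = ∇_a ∇ₖ h_{lj}`; constant curvature enters through the
commutation rule for second covariant derivatives of a 2-tensor.
The left side is `(δ_Y(đh))_i = Σ_j ∇_j (đh)_{ij}`, the right side is
`(*d(δ_Y h))_i = Σ ε_{ikl} ∇ₖ (δ_Y h)_l` with `(δ_Y h)_l = Σ_a ∇_a h_{al}`. -/
theorem statement5 (κ : ℝ) (h : Fin 3 → Fin 3 → ℝ)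
    (D1 : Fin 3 → Fin 3 → Fin 3 → ℝ)
    (D2 : Fin 3 → Fin 3 → Fin 3 → Fin 3 → ℝ)
    (hsym : ∀ i j, h i j = h j i)
    (hD1sym : ∀ k l j, D1 k l j = D1 k j l)
    (hD2sym : ∀ a k l j, D2 a k l j = D2 a k j l)
    (hcomm : ∀ a b c d, D2 a b c d - D2 b a c d
      = -κ * (kd b c * h a d - kd a c * h b d + kd b d * h c a - kd a d * h c b)) :
    ∀ i, (∑ j, dslashD D2 j i j)
      = ∑ k, ∑ l, eps i k l * (∑ a, D2 k a a l) := by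
  have hc0100 : D2 0 1 0 0 - D2 1 0 0 0 = -κ * (- h 0 1 - h 0 1) := by
    have := hcomm 0 1 0 0; simp (config := { decide := true }) [kd, hsym 1 0, hsym 2 0, hsym 2 1] at this; linear_combination this
  have hc0101 : D2 0 1 0 1 - D2 1 0 0 1 = -κ * (- h 1 1 + h 0 0) := by
    have := hcomm 0 1 0 1; simp (config := { decide := true }) [kd, hsym 1 0, hsym 2 0, hsym 2 1] at this; linear_combination this
  have hc0102 : D2 0 1 0 2 - D2 1 0 0 2 = -κ * (- h 1 2) := by
    have := hcomm 0 1 0 2; simp (config := { decide := true }) [kd, hsym 1 0, hsym 2 0, hsym 2 1] at this; linear_combination this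
  have hc0110 : D2 0 1 1 0 - D2 1 0 1 0 = -κ * (h 0 0 - h 1 1) := by
    have := hcomm 0 1 1 0; simp (config := { decide := true }) [kd, hsym 1 0, hsym 2 0, hsym 2 1] at this; linear_combination this
  have hc0111 : D2 0 1 1 1 - D2 1 0 1 1 = -κ * (h 0 1 + h 0 1) := by
    have := hcomm 0 1 1 1; simp (config := { decide := true }) [kd, hsym 1 0, hsym 2 0, hsym 2 1] at this; linear_combination this
  have hc0112 : D2 0 1 1 2 - D2 1 0 1 2 = -κ * (h 0 2) := by
    have := hcomm 0 1 1 2; simp (config := { decide := true }) [kd, hsym 1 0, hsym 2 0, hsym 2 1] at this; linear_combination this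
  have hc0120 : D2 0 1 2 0 - D2 1 0 2 0 = -κ * (- h 1 2) := by
    have := hcomm 0 1 2 0; simp (config := { decide := true }) [kd, hsym 1 0, hsym 2 0, hsym 2 1] at this; linear_combination this
  have hc0121 : D2 0 1 2 1 - D2 1 0 2 1 = -κ * (h 0 2) := by
    have := hcomm 0 1 2 1; simp (config := { decide := true }) [kd, hsym 1 0, hsym 2 0, hsym 2 1] at this; linear_combination this
  have hc0122 : D2 0 1 2 2 - D2 1 0 2 2 = 0 := by
    have := hcomm 0 1 2 2; simp (config := { decide := true }) [kd, hsym 1 0, hsym 2 0, hsym 2 1] at this; linear_combination this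
  have hc0200 : D2 0 2 0 0 - D2 2 0 0 0 = -κ * (- h 0 2 - h 0 2) := by
    have := hcomm 0 2 0 0; simp (config := { decide := true }) [kd, hsym 1 0, hsym 2 0, hsym 2 1] at this; linear_combination this
  have hc0201 : D2 0 2 0 1 - D2 2 0 0 1 = -κ * (- h 1 2) := by
    have := hcomm 0 2 0 1; simp (config := { decide := true }) [kd, hsym 1 0, hsym 2 0, hsym 2 1] at this; linear_combination this
  have hc0202 : D2 0 2 0 2 - D2 2 0 0 2 = -κ * (- h 2 2 + h 0 0) := by
    have := hcomm 0 2 0 2; simp (config := { decide := true }) [kd, hsym 1 0, hsym 2 0, hsym 2 1] at this; linear_combination this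
  have hc0210 : D2 0 2 1 0 - D2 2 0 1 0 = -κ * (- h 1 2) := by
    have := hcomm 0 2 1 0; simp (config := { decide := true }) [kd, hsym 1 0, hsym 2 0, hsym 2 1] at this; linear_combination this
  have hc0211 : D2 0 2 1 1 - D2 2 0 1 1 = 0 := by
    have := hcomm 0 2 1 1; simp (config := { decide := true }) [kd, hsym 1 0, hsym 2 0, hsym 2 1] at this; linear_combination this
  have hc0212 : D2 0 2 1 2 - D2 2 0 1 2 = -κ * (h 0 1) := by
    have := hcomm 0 2 1 2; simp (config := { decide := true }) [kd, hsym 1 0, hsym 2 0, hsym 2 1] at this; linear_combination this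
  have hc0220 : D2 0 2 2 0 - D2 2 0 2 0 = -κ * (h 0 0 - h 2 2) := by
    have := hcomm 0 2 2 0; simp (config := { decide := true }) [kd, hsym 1 0, hsym 2 0, hsym 2 1] at this; linear_combination this
  have hc0221 : D2 0 2 2 1 - D2 2 0 2 1 = -κ * (h 0 1) := by
    have := hcomm 0 2 2 1; simp (config := { decide := true }) [kd, hsym 1 0, hsym 2 0, hsym 2 1] at this; linear_combination this
  have hc0222 : D2 0 2 2 2 - D2 2 0 2 2 = -κ * (h 0 2 + h 0 2) := by
    have := hcomm 0 2 2 2; simp (config := { decide := true }) [kd, hsym 1 0, hsym 2 0, hsym 2 1] at this; linear_combination this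
  have hc1200 : D2 1 2 0 0 - D2 2 1 0 0 = 0 := by
    have := hcomm 1 2 0 0; simp (config := { decide := true }) [kd, hsym 1 0, hsym 2 0, hsym 2 1] at this; linear_combination this
  have hc1201 : D2 1 2 0 1 - D2 2 1 0 1 = -κ * (- h 0 2) := by
    have := hcomm 1 2 0 1; simp (config := { decide := true }) [kd, hsym 1 0, hsym 2 0, hsym 2 1] at this; linear_combination this
  have hc1202 : D2 1 2 0 2 - D2 2 1 0 2 = -κ * (h 0 1) := by
    have := hcomm 1 2 0 2; simp (config := { decide := true }) [kd, hsym 1 0, hsym 2 0, hsym 2 1] at this; linear_combination this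
  have hc1210 : D2 1 2 1 0 - D2 2 1 1 0 = -κ * (- h 0 2) := by
    have := hcomm 1 2 1 0; simp (config := { decide := true }) [kd, hsym 1 0, hsym 2 0, hsym 2 1] at this; linear_combination this
  have hc1211 : D2 1 2 1 1 - D2 2 1 1 1 = -κ * (- h 1 2 - h 1 2) := by
    have := hcomm 1 2 1 1; simp (config := { decide := true }) [kd, hsym 1 0, hsym 2 0, hsym 2 1] at this; linear_combination this
  have hc1212 : D2 1 2 1 2 - D2 2 1 1 2 = -κ * (- h 2 2 + h 1 1) := by
    have := hcomm 1 2 1 2; simp (config := { decide := true }) [kd, hsym 1 0, hsym 2 0, hsym 2 1] at this; linear_combination this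
  have hc1220 : D2 1 2 2 0 - D2 2 1 2 0 = -κ * (h 0 1) := by
    have := hcomm 1 2 2 0; simp (config := { decide := true }) [kd, hsym 1 0, hsym 2 0, hsym 2 1] at this; linear_combination this
  have hc1221 : D2 1 2 2 1 - D2 2 1 2 1 = -κ * (h 1 1 - h 2 2) := by
    have := hcomm 1 2 2 1; simp (config := { decide := true }) [kd, hsym 1 0, hsym 2 0, hsym 2 1] at this; linear_combination this
  have hc1222 : D2 1 2 2 2 - D2 2 1 2 2 = -κ * (h 1 2 + h 1 2) := by
    have := hcomm 1 2 2 2; simp (config := { decide := true }) [kd, hsym 1 0, hsym 2 0, hsym 2 1] at this; linear_combination this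
  intro i
  fin_cases i
  · simp (config := { decide := true }) [dslashD, eps, Fin.sum_univ_three]
    linear_combination 1 * hc0102 + 1 * hc0120 + (-1) * hc0201 + (-1) * hc0210 + 1 * hc1200 + (-1) * hc1211 + (-1) * hc1222 + (-1) * (hD2sym 0 1 0 2) + 1 * (hD2sym 0 2 0 1) + (-1) * (hD2sym 1 1 1 2) + (-1) * (hD2sym 2 2 1 2)
  · simp (config := { decide := true }) [dslashD, eps, Fin.sum_univ_three]
    linear_combination 2 * hc0121 + 1 * hc0200 + (-1) * hc0211 + 1 * hc0222 + 1 * hc1201 + 1 * hc1210 + 1 * (hD2sym 0 0 0 2) + 1 * (hD2sym 0 1 1 2) + 1 * (hD2sym 1 2 0 1) + 1 * (hD2sym 2 2 0 2)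
  · simp (config := { decide := true }) [dslashD, eps, Fin.sum_univ_three]
    linear_combination (-1) * hc0100 + (-1) * hc0111 + 1 * hc0122 + (-2) * hc0212 + 2 * hc1202 + (-1) * (hD2sym 0 0 0 1) + 1 * (hD2sym 0 2 1 2) + (-1) * (hD2sym 1 1 0 1) + (-1) * (hD2sym 1 2 0 2)
end

section
/- Let (Y,g) be an oriented Riemannian 3-manifold of constant sectional curvature κ. For any symmetric 2-tensor h: đ²h = −4 Δ_g tf(h) − 2 (∇² tr h)° + 3 K_g(δ_Y h) + 12 κ tf(h), where tf(h) = h − (1/3)(tr h) g, Δ_g is the rough (connection) Laplacian on symmetric 2-tensors, (∇²f)° is the trace-free Hessian, K_g is the conformal Killing operator K_g(η)_{ij} = ∇_i η_j + ∇_j η_i − (2/3)(∇^kη_k) g_{ij}, and (δ_Y h)_j = ∇^i h_{ij}. -/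
set_option maxHeartbeats 1600000


open scoped BigOperators
open MeasureTheory

/-- on an oriented 3-manifold of constant sectional curvature κ,
`đ²h = −4 Δ_g tf(h) − 2 (∇² tr h)° + 3 K_g(δ_Y h) + 12 κ tf(h)`.
Components at a point in an oriented orthonormal frame: `h`,
`D1 k l j = ∇ₖ h_{lj}`, `D2 a k l j = ∇_a ∇ₖ h_{lj}`. The left side is `đ`
applied to `đh` (whose covariant derivative components are `dslashD D2`);
on the right, `Δ_g h_{ij} = Σ_a D2 a a i j`, `tr h = Σ_a h a a`,
`tf(h) = h − (1/3)(tr h) g`, `(∇² tr h)_{ij} = Σ_a D2 i j a a`,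
`(δ_Y h)_j = Σ_a D1 a a j` and `K_g` is the conformal Killing operator. -/
theorem statement6 (κ : ℝ) (h : Fin 3 → Fin 3 → ℝ)
    (D1 : Fin 3 → Fin 3 → Fin 3 → ℝ)
    (D2 : Fin 3 → Fin 3 → Fin 3 → Fin 3 → ℝ)
    (hsym : ∀ i j, h i j = h j i)
    (hD1sym : ∀ k l j, D1 k l j = D1 k j l)
    (hD2sym : ∀ a k l j, D2 a k l j = D2 a k j l)
    (hcomm : ∀ a b c d, D2 a b c d - D2 b a c d
      = -κ * (kd b c * h a d - kd a c * h b d + kd b d * h c a - kd a d * h c b)) :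
    ∀ i j,
      dslash (fun a b c => dslashD D2 a b c) i j
        = -4 * ((∑ a, D2 a a i j) - (1/3) * (∑ a, ∑ b, D2 a a b b) * kd i j)
          - 2 * ((∑ a, D2 i j a a) - (1/3) * (∑ c, ∑ a, D2 c c a a) * kd i j)
          + 3 * ((∑ a, D2 i a a j) + (∑ a, D2 j a a i)
              - (2/3) * (∑ k, ∑ a, D2 k a a k) * kd i j)
          + 12 * κ * (h i j - (1/3) * (∑ a, h a a) * kd i j) := by

  classical
  set S : Fin 3 → Fin 3 → Fin 3 → Fin 3 → ℝ :=
    fun a b c d => (D2 a b c d + D2 b a c d + D2 a b d c + D2 b a d c) / 4 with hSdef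
  have hS : ∀ a b c d, D2 a b c d = S a b c d
      - (κ/2) * (kd b c * h a d - kd a c * h b d + kd b d * h c a - kd a d * h c b) := by
    intro a b c d
    simp only [hSdef]
    linear_combination (hcomm a b c d)/2 + (hD2sym a b c d)/4 + (hD2sym b a c d)/4
  have s1 : ∀ c d, S 1 0 c d = S 0 1 c d := by intro c d; simp only [hSdef]; ring
  have s2 : ∀ c d, S 2 0 c d = S 0 2 c d := by intro c d; simp only [hSdef]; ring
  have s3 : ∀ c d, S 2 1 c d = S 1 2 c d := by intro c d; simp only [hSdef]; ring
  have t1 : ∀ a b, S a b 1 0 = S a b 0 1 := by intro a b; simp only [hSdef]; ring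
  have t2 : ∀ a b, S a b 2 0 = S a b 0 2 := by intro a b; simp only [hSdef]; ring
  have t3 : ∀ a b, S a b 2 1 = S a b 1 2 := by intro a b; simp only [hSdef]; ring
  have g1 : h 1 0 = h 0 1 := hsym 1 0
  have g2 : h 2 0 = h 0 2 := hsym 2 0
  have g3 : h 2 1 = h 1 2 := hsym 2 1
  clear_value S
  have m2 : (⟨2, by omega⟩ : Fin 3) = 2 := rfl
  intro i j
  fin_cases i <;> fin_cases j <;>
    (simp only [dslash, dslashD, Fin.sum_univ_three]
     norm_num [eps, kd, Prod.mk.injEq, Fin.ext_iff, m2]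
     simp only [hS, s1, s2, s3, t1, t2, t3, g1, g2, g3]
     norm_num [kd, Fin.ext_iff, m2]
     ring)
end

section
/- Let (Y,g) be an oriented Riemannian 3-manifold of constant sectional curvature κ. Then đ commutes with the rough Laplacian on symmetric 2-tensors: đ(Δ_g h) = Δ_g(đ h) for every smooth symmetric 2-tensor h. -/
open scoped BigOperators
open MeasureTheory

/-- Components `∇_a ∇_b (đh)_{ij}` of the second covariant derivative of `đh`,
given the third covariant derivative components
`D3 a b k l j = ∇_a ∇_b ∇ₖ h_{lj}` of `h`. -/
noncomputable def dslashD2 (D3 : Fin 3 → Fin 3 → Fin 3 → Fin 3 → Fin 3 → ℝ) (a b i j : Fin 3) : ℝ :=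
  (1/2) * ((∑ k, ∑ l, eps i k l * (D3 a b k l j - D3 a b l k j))
    + (∑ k, ∑ l, eps j k l * (D3 a b k l i - D3 a b l k i)))

set_option maxHeartbeats 2000000 in
/-- on an oriented 3-manifold of constant sectional curvature κ,
`đ` commutes with the rough Laplacian on symmetric 2-tensors:
`đ(Δ_g h) = Δ_g(đ h)`.  Components at a point in an oriented orthonormal
frame: `h`, `D1 k l j = ∇ₖ h_{lj}`, `D2`, `D3` the higher covariant
derivatives, with the constant-curvature commutation rules. -/
theorem statement7 (κ : ℝ) (h : Fin 3 → Fin 3 → ℝ)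
    (D1 : Fin 3 → Fin 3 → Fin 3 → ℝ)
    (D2 : Fin 3 → Fin 3 → Fin 3 → Fin 3 → ℝ)
    (D3 : Fin 3 → Fin 3 → Fin 3 → Fin 3 → Fin 3 → ℝ)
    (hsym : ∀ i j, h i j = h j i)
    (hD1sym : ∀ k l j, D1 k l j = D1 k j l)
    (hD2sym : ∀ a k l j, D2 a k l j = D2 a k j l)
    (hD3sym : ∀ a b k l j, D3 a b k l j = D3 a b k j l)
    (hcomm2 : ∀ a b c d, D2 a b c d - D2 b a c d
      = -κ * (kd b c * h a d - kd a c * h b d + kd b d * h c a - kd a d * h c b))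
    (hcomm12 : ∀ a b c d e, D3 a b c d e - D3 b a c d e
      = -κ * (kd b c * D1 a d e - kd a c * D1 b d e
          + kd b d * D1 c a e - kd a d * D1 c b e
          + kd b e * D1 c d a - kd a e * D1 c d b))
    (hcomm23 : ∀ a b c d e, D3 a b c d e - D3 a c b d e
      = -κ * (kd c d * D1 a b e - kd b d * D1 a c e
          + kd c e * D1 a d b - kd b e * D1 a d c)) :
    ∀ i j,
      dslash (fun k l j => ∑ a, D3 k a a l j) i j
        = ∑ a, dslashD2 D3 a a i j := by
  have key : ∀ k l j : Fin 3, (∑ a, D3 k a a l j)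
      = (∑ a, D3 a a k l j)
        - 2*κ*(D1 k l j + D1 l k j + D1 j l k
          - kd k l * (D1 0 0 j + D1 1 1 j + D1 2 2 j)
          - kd k j * (D1 0 l 0 + D1 1 l 1 + D1 2 l 2)) := by
    intro k l j
    have a0 := hcomm12 k 0 0 l j
    have a1 := hcomm12 k 1 1 l j
    have a2 := hcomm12 k 2 2 l j
    have b0 := hcomm23 0 k 0 l j
    have b1 := hcomm23 1 k 1 l j
    have b2 := hcomm23 2 k 2 l j
    clear hcomm12 hcomm23 hcomm2 hsym hD1sym hD2sym hD3sym
    fin_cases k <;> fin_cases l <;> fin_cases j <;>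
      simp (config := { decide := true }) [kd, Fin.sum_univ_three] at * <;>
      linarith
  have hF : (fun k l j => ∑ a, D3 k a a l j)
      = fun k l j : Fin 3 => (∑ a, D3 a a k l j)
        - 2*κ*(D1 k l j + D1 l k j + D1 j l k
          - kd k l * (D1 0 0 j + D1 1 1 j + D1 2 2 j)
          - kd k j * (D1 0 l 0 + D1 1 l 1 + D1 2 l 2)) := by
    funext k l j; exact key k l j
  have hk : ∀ a b c, κ * D1 a b c = κ * D1 a c b := fun a b c => by
    rw [hD1sym a b c]
  intro i j
  rw [hF]
  fin_cases i <;> fin_cases j <;>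
    simp (config := { decide := true }) [dslash, dslashD2, eps, kd,
      Fin.sum_univ_three] <;>
    linarith [hk 0 0 0, hk 0 0 1, hk 0 0 2, hk 0 1 0, hk 0 1 1, hk 0 1 2, hk 0 2 0, hk 0 2 1, hk 0 2 2, hk 1 0 0, hk 1 0 1, hk 1 0 2, hk 1 1 0, hk 1 1 1, hk 1 1 2, hk 1 2 0, hk 1 2 1, hk 1 2 2, hk 2 0 0, hk 2 0 1, hk 2 0 2, hk 2 1 0, hk 2 1 1, hk 2 1 2, hk 2 2 0, hk 2 2 1, hk 2 2 2]
end

section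
/- Let (Y,g) be a Riemannian 3-manifold of constant sectional curvature κ. For every 1-form ω: Δ_g K_g(ω) = K_g((Δ_g + 4κ)ω), where Δ_g denotes the rough Laplacian (on symmetric 2-tensors on the left, and on 1-forms on the right) and K_g is the conformal Killing operator. -/
open scoped BigOperators
open MeasureTheory

/-- on a 3-manifold of constant sectional curvature κ, for every
1-form `ω`: `Δ_g K_g(ω) = K_g((Δ_g + 4κ)ω)`.  Components at a point in an
orthonormal frame: `ω`, `Dω a b = ∇_a ω_b`, `D2 a b c = ∇_a∇_b ω_c`,
`D3 a b c d = ∇_a∇_b∇_c ω_d`, with the constant-curvature commutation rules.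
Left side: `(Δ_g K_g(ω))_{ij} = Σ_a ∇_a∇_a K_g(ω)_{ij}`; right side: `K_g`
applied to `(Δ_g ω + 4κω)_j = Σ_a D2 a a j + 4κ ω_j`. -/
theorem statement9 (κ : ℝ) (ω : Fin 3 → ℝ)
    (Dω : Fin 3 → Fin 3 → ℝ) (D2 : Fin 3 → Fin 3 → Fin 3 → ℝ)
    (D3 : Fin 3 → Fin 3 → Fin 3 → Fin 3 → ℝ)
    (hcomm2 : ∀ a b c, D2 a b c - D2 b a c = -κ * (kd b c * ω a - kd a c * ω b))
    (hcomm12 : ∀ a b c d, D3 a b c d - D3 b a c d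
      = -κ * (kd b c * Dω a d - kd a c * Dω b d + kd b d * Dω c a - kd a d * Dω c b))
    (hcomm23 : ∀ a b c d, D3 a b c d - D3 a c b d
      = -κ * (kd c d * Dω a b - kd b d * Dω a c)) :
    ∀ i j,
      (∑ a, (D3 a a i j + D3 a a j i)) - (2/3) * (∑ a, ∑ k, D3 a a k k) * kd i j
        = ((∑ a, D3 i a a j) + 4 * κ * Dω i j)
          + ((∑ a, D3 j a a i) + 4 * κ * Dω j i)
          - (2/3) * (∑ k, ((∑ a, D3 k a a k) + 4 * κ * Dω k k)) * kd i j := by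
  have key : ∀ i j, (∑ a, D3 a a i j)
      = (∑ a, D3 i a a j) + 2*κ*(Dω i j + Dω j i) - 2*κ*kd i j*(∑ a, Dω a a) := by
    intro i j
    have h : ∀ a : Fin 3, D3 a a i j = D3 i a a j
        - κ*(kd i j * Dω a a - kd a j * Dω a i)
        - κ*(kd i a * Dω a j - kd a a * Dω i j + kd i j * Dω a a - kd a j * Dω a i) := by
      intro a
      have h1 := hcomm23 a a i j
      have h2 := hcomm12 a i a j
      linarith
    rw [Finset.sum_congr rfl (fun a _ => h a)]
    fin_cases i <;> fin_cases j <;>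
      simp [kd, Fin.sum_univ_three] <;> ring
  have hsym : (∑ a, ∑ k, D3 a a k k) = ∑ k, ∑ a, D3 a a k k := Finset.sum_comm
  have hT : (∑ a, ∑ k, D3 a a k k)
      = (∑ k, ∑ a, D3 k a a k) + 4*κ*(∑ a, Dω a a)
        - 2*κ*(∑ k : Fin 3, kd k k)*(∑ a, Dω a a) := by
    rw [hsym, Finset.sum_congr rfl (fun k _ => key k k)]
    simp [kd, Fin.sum_univ_three]; ring
  intro i j
  have h1 := key i j
  have h2 := key j i
  have hks : kd j i = kd i j := by simp [kd, eq_comm]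
  rw [hks] at h2
  have hkd : (∑ k : Fin 3, kd k k) = 3 := by simp [kd, Fin.sum_univ_three]
  rw [hkd] at hT
  simp only [Fin.sum_univ_three] at h1 h2 hT ⊢
  linear_combination h1 + h2 - (2/3) * kd i j * hT
end

section
/- Let (Y,g) be a Riemannian 3-manifold of constant sectional curvature κ and let η be a 1-form satisfying δ_Y η = 0 and Δ_H η = ν η. Then δ_Y K_g(η) = (4κ − ν) η. Similarly, if η = dφ with Δ_H φ = μ φ, then δ_Y K_g(dφ) = (−(4/3)μ + 4κ) dφ. -/
open scoped BigOperators
open MeasureTheory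

/-- on a 3-manifold of constant sectional curvature κ:
(a) if `η` is a coclosed 1-form with `Δ_H η = ν η`, then
    `δ_Y K_g(η) = (4κ − ν) η`;
(b) if `η = dφ` with `Δ_H φ = μ φ`, then `δ_Y K_g(dφ) = (−(4/3)μ + 4κ) dφ`.
Components at a point in an orthonormal frame.  For (a): `η`,
`Dη a b = ∇_a η_b`, `D2η a b c = ∇_a∇_b η_c`, coclosedness `Σ_a Dη a a = 0`
(together with its derivative), the Hodge Laplacian on 1-forms as in
`(Δ_H η)_c = −Σ_a D2η c a a − Σ_a D2η a a c + Σ_a D2η a c a`, and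
`(δ_Y K_g(η))_j = Σ_i ∇_i K_g(η)_{ij}`.  For (b): `φ`, `Dφ a = ∇_a φ`,
`D2φ a b = ∇_a∇_b φ` (a symmetric Hessian), `D3φ a b c = ∇_a∇_b∇_c φ`, with
`Δ_H φ = δdφ = −Σ_a D2φ a a = μ φ` (and its derivative). -/
theorem statement15 (κ ν μ : ℝ)
    (η : Fin 3 → ℝ) (Dη : Fin 3 → Fin 3 → ℝ) (D2η : Fin 3 → Fin 3 → Fin 3 → ℝ)
    (hcommη : ∀ a b c, D2η a b c - D2η b a c = -κ * (kd b c * η a - kd a c * η b))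
    (hco : (∑ a, Dη a a) = 0)
    (hco' : ∀ k, (∑ a, D2η k a a) = 0)
    (heigη : ∀ c, (-(∑ a, D2η c a a) - (∑ a, D2η a a c) + (∑ a, D2η a c a))
      = ν * η c)
    (φ : ℝ) (Dφ : Fin 3 → ℝ) (D2φ : Fin 3 → Fin 3 → ℝ)
    (D3φ : Fin 3 → Fin 3 → Fin 3 → ℝ)
    (hhess : ∀ a b, D2φ a b = D2φ b a)
    (hD3sym : ∀ a b c, D3φ a b c = D3φ a c b)
    (hcommφ : ∀ a b c, D3φ a b c - D3φ b a c = -κ * (kd b c * Dφ a - kd a c * Dφ b))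
    (heigφ : -(∑ a, D2φ a a) = μ * φ)
    (heigφ' : ∀ k, -(∑ a, D3φ k a a) = μ * Dφ k) :
    (∀ j, (∑ i, D2η i i j) + (∑ i, D2η i j i) - (2/3) * (∑ k, D2η j k k)
        = (4 * κ - ν) * η j)
    ∧ (∀ j, (∑ i, D3φ i i j) + (∑ i, D3φ i j i) - (2/3) * (∑ k, D3φ j k k)
        = (-(4/3) * μ + 4 * κ) * Dφ j) := by
  constructor
  · intro j
    have h1 := hco' j
    have h2 := heigη j
    have h30 := hcommη 0 j 0
    have h31 := hcommη 1 j 1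
    have h32 := hcommη 2 j 2
    fin_cases j <;> simp [Fin.sum_univ_three, kd] at * <;> linarith
  · intro j
    have h1 := heigφ' j
    have h30 := hcommφ 0 j 0
    have h31 := hcommφ 1 j 1
    have h32 := hcommφ 2 j 2
    have hs0 := hD3sym 0 0 j
    have hs1 := hD3sym 1 1 j
    have hs2 := hD3sym 2 2 j
    fin_cases j <;> simp [Fin.sum_univ_three, kd] at * <;> linarith
end

section
/- For κ = 1 and μ = j(j+2) with integer j ≥ 2, the complex numbers α_j^± = sqrt( j(j+2) − 2 ± (2/3)·i·sqrt(3(j−1)(j+3)) ) satisfy |Re(α_j^±)| > √6. -/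
lemma aux17 (a b : ℝ) (ha : 6 ≤ a) (hb : b ≠ 0) :
    Real.sqrt 6 < |(((a : ℂ) + (b : ℂ) * Complex.I) ^ ((1 : ℂ)/2)).re| := by
  set z : ℂ := (a : ℂ) + (b : ℂ) * Complex.I with hzdef
  set w : ℂ := z ^ ((1 : ℂ)/2) with hwdef
  have hw2 : w ^ 2 = z := by
    have := Complex.cpow_nat_inv_pow z (n := 2) (by norm_num)
    have h12 : ((1 : ℂ)/2) = ((2 : ℕ) : ℂ)⁻¹ := by norm_num
    rw [hwdef, h12]
    exact this
  have hre : z.re = a := by simp [hzdef]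
  have him : z.im = b := by simp [hzdef]
  have hreq : w.re ^ 2 - w.im ^ 2 = a := by
    have : (w ^ 2).re = a := by rw [hw2, hre]
    rw [pow_two, Complex.mul_re] at this
    nlinarith [this]
  have hns : (Complex.normSq w) ^ 2 = a ^ 2 + b ^ 2 := by
    have : Complex.normSq (w ^ 2) = Complex.normSq z := by rw [hw2]
    rw [map_pow] at this
    rw [this, Complex.normSq_apply, hre, him]; ring
  have hnw : a < Complex.normSq w := by
    nlinarith [Complex.normSq_nonneg w, sq_nonneg b, sq_abs b, abs_pos.mpr hb]
  have hre2 : 6 < w.re ^ 2 := by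
    have : Complex.normSq w = w.re ^ 2 + w.im ^ 2 := by
      rw [Complex.normSq_apply]; ring
    nlinarith
  have hpos : 0 < |w.re| := by
    rcases eq_or_ne w.re 0 with h | h
    · rw [h] at hre2; norm_num at hre2
    · exact abs_pos.mpr h
  have : Real.sqrt 6 < Real.sqrt (|w.re|^2) := by
    apply Real.sqrt_lt_sqrt (by norm_num)
    rw [sq_abs]; exact hre2
  rwa [Real.sqrt_sq (abs_nonneg _)] at this

/-- for κ = 1 and μ = j(j+2) with integer j ≥ 2, the complex
numbers `α_j^± = sqrt( j(j+2) − 2 ± (2/3)·i·sqrt(3(j−1)(j+3)) )` (principal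
square root) satisfy `|Re(α_j^±)| > √6`. -/
theorem statement17 (j : ℤ) (hj : 2 ≤ j) :
    Real.sqrt 6 <
      |((((j : ℂ) * ((j : ℂ) + 2) - 2)
          + (2/3) * Complex.I * (Real.sqrt (3 * ((j : ℝ) - 1) * ((j : ℝ) + 3)) : ℝ))
          ^ ((1 : ℂ)/2)).re|
    ∧ Real.sqrt 6 <
      |((((j : ℂ) * ((j : ℂ) + 2) - 2)
          - (2/3) * Complex.I * (Real.sqrt (3 * ((j : ℝ) - 1) * ((j : ℝ) + 3)) : ℝ))
          ^ ((1 : ℂ)/2)).re| := by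
  have hjr : (2 : ℝ) ≤ (j : ℝ) := by exact_mod_cast hj
  set a : ℝ := (j : ℝ) * ((j : ℝ) + 2) - 2 with hadef
  have ha : 6 ≤ a := by nlinarith
  set s : ℝ := Real.sqrt (3 * ((j : ℝ) - 1) * ((j : ℝ) + 3)) with hsdef
  have hs : 0 < s := by
    apply Real.sqrt_pos.mpr
    nlinarith
  set b : ℝ := (2/3) * s with hbdef
  have hb : b ≠ 0 := by positivity
  have h1 : (((j : ℂ) * ((j : ℂ) + 2) - 2) + (2/3) * Complex.I * (s : ℝ))
      = (a : ℂ) + (b : ℂ) * Complex.I := by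
    push_cast [hadef, hbdef]; ring
  have h2 : (((j : ℂ) * ((j : ℂ) + 2) - 2) - (2/3) * Complex.I * (s : ℝ))
      = (a : ℂ) + ((-b : ℝ) : ℂ) * Complex.I := by
    push_cast [hadef, hbdef]; ring
  rw [h1, h2]
  exact ⟨aux17 a b ha hb, aux17 a (-b) ha (by simpa using hb)⟩
end

section
/- Let g = dt² + g_{S³} be the product metric on ℝ×S³ with g_{S³} the round metric of curvature 1, and let φ be an eigenfunction of the Laplacian on S³ with Δφ = 3φ (lowest nonconstant eigenvalue). Then for any constants C₃, C₄, the tensor h = p(t)φ(3dt⊗dt − g_{S³}) + q(t)(dt⊙dφ), with p(t) = C₃e^t − C₄e^{−t} and q(t) = C₃e^t + C₄e^{−t}, equals K_g(ω̃) for the 1-form ω̃ = (1/2)(C₃(t+3)e^t − C₄(t−3)e^{−t})φ dt + (1/2)(−C₃ t e^t − C₄ t e^{−t}) dφ, where K_g is the conformal Killing operator of g on the 4-manifold ℝ×S³ and dt⊙dφ = dt⊗dφ + dφ⊗dt. -/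
open scoped BigOperators
open MeasureTheory

private lemma deriv1 (C3 C4 t : ℝ) :
    deriv (fun s => (1/2) * (C3 * (s + 3) * Real.exp s
          - C4 * (s - 3) * Real.exp (-s))) t
    = (1/2) * (C3 * (t + 4) * Real.exp t - C4 * (4 - t) * Real.exp (-t)) := by
  have h1 : HasDerivAt (fun s : ℝ => Real.exp (-s)) (-Real.exp (-t)) t := by
    simpa [Function.comp_def] using (Real.hasDerivAt_exp (-t)).comp t ((hasDerivAt_id t).neg)
  have h : HasDerivAt (fun s => (1/2) * (C3 * (s + 3) * Real.exp s
          - C4 * (s - 3) * Real.exp (-s)))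
      ((1/2) * ((C3 * 1 * Real.exp t + C3 * (t + 3) * Real.exp t)
        - (C4 * 1 * Real.exp (-t) + C4 * (t - 3) * (-Real.exp (-t))))) t := by
    exact ((((hasDerivAt_id t).add_const 3).const_mul C3).mul (Real.hasDerivAt_exp t)).sub
      ((((hasDerivAt_id t).sub_const 3).const_mul C4).mul h1) |>.const_mul (1/2)
  rw [h.deriv]; ring

private lemma deriv2 (C3 C4 t : ℝ) :
    deriv (fun s => (1/2) * (-C3 * s * Real.exp s - C4 * s * Real.exp (-s))) t
    = (1/2) * (-C3 * (1 + t) * Real.exp t - C4 * (1 - t) * Real.exp (-t)) := by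
  have h1 : HasDerivAt (fun s : ℝ => Real.exp (-s)) (-Real.exp (-t)) t := by
    simpa [Function.comp_def] using (Real.hasDerivAt_exp (-t)).comp t ((hasDerivAt_id t).neg)
  have h : HasDerivAt (fun s => (1/2) * (-C3 * s * Real.exp s - C4 * s * Real.exp (-s)))
      ((1/2) * ((-C3 * 1 * Real.exp t + -C3 * t * Real.exp t)
        - (C4 * 1 * Real.exp (-t) + C4 * t * (-Real.exp (-t))))) t := by
    exact (((hasDerivAt_id t).const_mul (-C3)).mul (Real.hasDerivAt_exp t)).sub
      (((hasDerivAt_id t).const_mul C4).mul h1) |>.const_mul (1/2)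
  rw [h.deriv]; ring

/-- on the cylinder ℝ×S³ with product metric `g = dt² + g_{S³}`,
for a lowest nonconstant eigenfunction φ (`Δ_{S³}φ = 3φ`, with Obata's
equation `∇²φ = −φ g_{S³}`), the tensor
`h = p(t)φ(3dt⊗dt − g_{S³}) + q(t)(dt⊙dφ)`, with `p = C₃eᵗ − C₄e⁻ᵗ` and
`q = C₃eᵗ + C₄e⁻ᵗ`, equals `K_g(ω̃)` for
`ω̃ = (1/2)(C₃(t+3)eᵗ − C₄(t−3)e⁻ᵗ)φ dt + (1/2)(−C₃teᵗ − C₄te⁻ᵗ)dφ`.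
Using the block decomposition of `K_g` on the cylinder
(`K_g(f dt + ω) = ((3/2)ḟ − (1/2)δω)dt⊗dt + (ω̇ + df)⊙dt
 + L_{g_{S³}}(ω) − (1/2)(ḟ + δω)g_{S³}`), with `ω = m(t)dφ`,
`δ(dφ) = Σ_a ∇_a∇_aφ`, `L(dφ)_{ij} = 2∇ᵢ∇ⱼφ`, the claim is the equality of
the three blocks: the dt⊗dt block `3p(t)φ`, the mixed block `q(t)dφ`, and the
spherical block `−p(t)φ g_{S³}`.  Components on S³ in an orthonormal frame:
`φ`, `Dφ y i = ∇ᵢφ`, `D2φ y i j = ∇ᵢ∇ⱼφ = −φ δ_{ij}`. -/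
theorem statement19 {Y : Type*} (C3 C4 : ℝ)
    (φ : Y → ℝ) (Dφ : Y → Fin 3 → ℝ) (D2φ : Y → Fin 3 → Fin 3 → ℝ)
    (hObata : ∀ y i j, D2φ y i j = -(φ y) * kd i j)
    (heig : ∀ y, -(∑ a, D2φ y a a) = 3 * φ y) :
    (∀ t : ℝ, ∀ y : Y,
      (3/2) * deriv (fun s => (1/2) * (C3 * (s + 3) * Real.exp s
          - C4 * (s - 3) * Real.exp (-s))) t * φ y
        - (1/2) * (∑ a, ((1/2) * (-C3 * t * Real.exp t - C4 * t * Real.exp (-t)))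
            * D2φ y a a)
      = 3 * (C3 * Real.exp t - C4 * Real.exp (-t)) * φ y)
    ∧ (∀ t : ℝ, ∀ y : Y, ∀ i : Fin 3,
      deriv (fun s => (1/2) * (-C3 * s * Real.exp s - C4 * s * Real.exp (-s))) t
          * Dφ y i
        + ((1/2) * (C3 * (t + 3) * Real.exp t - C4 * (t - 3) * Real.exp (-t)))
          * Dφ y i
      = (C3 * Real.exp t + C4 * Real.exp (-t)) * Dφ y i)
    ∧ (∀ t : ℝ, ∀ y : Y, ∀ i j : Fin 3,
      2 * ((1/2) * (-C3 * t * Real.exp t - C4 * t * Real.exp (-t))) * D2φ y i j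
        - (1/2) * (deriv (fun s => (1/2) * (C3 * (s + 3) * Real.exp s
              - C4 * (s - 3) * Real.exp (-s))) t * φ y
            + (∑ a, ((1/2) * (-C3 * t * Real.exp t - C4 * t * Real.exp (-t)))
                * D2φ y a a)) * kd i j
      = -(C3 * Real.exp t - C4 * Real.exp (-t)) * (φ y) * kd i j) := by

  refine ⟨?_, ?_, ?_⟩
  · intro t y
    have hs : ∑ a, D2φ y a a = -3 * φ y := by linarith [heig y]
    rw [deriv1, ← Finset.mul_sum, hs]
    have := Real.exp_ne_zero t
    nlinarith [Real.exp_ne_zero t, Real.exp_pos t, Real.exp_pos (-t),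
      mul_pos (Real.exp_pos t) (Real.exp_pos (-t))]
  · intro t y i
    rw [deriv2]; ring
  · intro t y i j
    have hs : ∑ a, D2φ y a a = -3 * φ y := by linarith [heig y]
    rw [deriv1, ← Finset.mul_sum, hs, hObata y i j]
    ring
end
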